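/- Fix n ∈ ℕ and k ≤ n. Let a : ℝ → Matrix (Fin n) (Fin n) ℝ be such that for every t the matrix a(t) is symmetric and a(t) i j equals -1 if i = j and 0 if i ≠ j, whenever i < k or j < k. Let f : ℝ → (Fin n → ℝ) have twice differentiable components satisfying the linear system f_j''(t) + Σ_i a(t) i j · f_i(t) = 0 for all j and all t. If f_i(t) → 0 as t → -∞ for every i, and f_i(0) = 0 for every i < k, then f_i(t) = 0 for all t ∈ ℝ and all i < k. -/

import Mathlib

open Filter Real

lemma auxODE (F : ℝ → ℝ) (hF : Differentiable ℝ F) (hF' : Differentiable ℝ (deriv F))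
    (hode : ∀ t, deriv (deriv F) t = F t) (hdec : Tendsto F atBot (nhds 0))
    (h0 : F 0 = 0) : ∀ t, F t = 0 := by
  set u : ℝ → ℝ := fun t => Real.exp (-t) * (F t + deriv F t) with hu
  set v : ℝ → ℝ := fun t => Real.exp t * (deriv F t - F t) with hv
  have hderivF : ∀ t, HasDerivAt F (deriv F t) t := fun t => (hF t).hasDerivAt
  have hderivF' : ∀ t, HasDerivAt (deriv F) (F t) t := fun t => by
    have := (hF' t).hasDerivAt
    rwa [hode t] at this
  have hu' : ∀ t, HasDerivAt u 0 t := by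
    intro t
    have he : HasDerivAt (fun t : ℝ => Real.exp (-t)) (Real.exp (-t) * (-1)) t :=
      (hasDerivAt_neg t).exp
    have := he.mul ((hderivF t).add (hderivF' t))
    exact this.congr_deriv (by simp only [Pi.add_apply, Pi.sub_apply]; ring)
  have hv' : ∀ t, HasDerivAt v 0 t := by
    intro t
    have he : HasDerivAt (fun t : ℝ => Real.exp t) (Real.exp t) t := Real.hasDerivAt_exp t
    have := he.mul ((hderivF' t).sub (hderivF t))
    exact this.congr_deriv (by simp only [Pi.add_apply, Pi.sub_apply]; ring)
  have hucst : ∀ t, u t = u 0 := by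
    intro t
    exact is_const_of_deriv_eq_zero (fun x => (hu' x).differentiableAt)
      (fun x => (hu' x).deriv) t 0
  have hvcst : ∀ t, v t = v 0 := by
    intro t
    exact is_const_of_deriv_eq_zero (fun x => (hv' x).differentiableAt)
      (fun x => (hv' x).deriv) t 0
  set C := u 0 with hC
  set D := v 0 with hD
  -- 2 F t = C * exp t - D * exp (-t)
  have key : ∀ t, 2 * F t = C * Real.exp t - D * Real.exp (-t) := by
    intro t
    have h1 : Real.exp (-t) * (F t + deriv F t) = C := hucst t
    have h2 : Real.exp t * (deriv F t - F t) = D := hvcst t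
    have e1 : F t + deriv F t = C * Real.exp t := by
      have := congrArg (· * Real.exp t) h1
      simpa [mul_comm, mul_assoc, mul_left_comm, ← Real.exp_add] using this
    have e2 : deriv F t - F t = D * Real.exp (-t) := by
      have := congrArg (· * Real.exp (-t)) h2
      simpa [mul_comm, mul_assoc, mul_left_comm, ← Real.exp_add] using this
    linarith [e1, e2]
  have hexp0 : Tendsto (fun t : ℝ => Real.exp t) atBot (nhds 0) := Real.tendsto_exp_atBot
  have hDexp : Tendsto (fun t : ℝ => D * Real.exp (-t)) atBot (nhds 0) := by
    have : (fun t : ℝ => D * Real.exp (-t)) = fun t => C * Real.exp t - 2 * F t := by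
      funext t; have := key t; linarith
    rw [this]
    have h1 : Tendsto (fun t : ℝ => C * Real.exp t) atBot (nhds (C * 0)) :=
      hexp0.const_mul C
    have h2 : Tendsto (fun t : ℝ => 2 * F t) atBot (nhds (2 * 0)) := hdec.const_mul 2
    simpa using h1.sub h2
  have hDzero : D = 0 := by
    have hprod : Tendsto (fun t : ℝ => (D * Real.exp (-t)) * Real.exp t) atBot (nhds (0 * 0)) :=
      hDexp.mul hexp0
    have heq : (fun t : ℝ => (D * Real.exp (-t)) * Real.exp t) = fun _ => D := by
      funext t
      rw [mul_assoc, ← Real.exp_add]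
      simp
    rw [heq] at hprod
    simpa using tendsto_nhds_unique tendsto_const_nhds hprod
  have hCzero : C = 0 := by
    have := key 0
    rw [h0, hDzero] at this
    simp at this; linarith
  intro t
  have := key t
  rw [hCzero, hDzero] at this
  linarith

theorem stmt_1 (n k : ℕ) (hk : k ≤ n)
    (a : ℝ → Matrix (Fin n) (Fin n) ℝ)
    (hsym : ∀ t : ℝ, (a t).IsSymm)
    (hentries : ∀ t : ℝ, ∀ i j : Fin n, ((i : ℕ) < k ∨ (j : ℕ) < k) →
      a t i j = if i = j then -1 else 0)
    (f : ℝ → Fin n → ℝ)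
    (hdiff : ∀ i : Fin n, Differentiable ℝ (fun t => f t i))
    (hdiff' : ∀ i : Fin n, Differentiable ℝ (deriv (fun t => f t i)))
    (hode : ∀ j : Fin n, ∀ t : ℝ,
      deriv (deriv (fun s => f s j)) t + ∑ i : Fin n, a t i j * f t i = 0)
    (hdecay : ∀ i : Fin n, Tendsto (fun t => f t i) atBot (nhds 0))
    (hinit : ∀ i : Fin n, (i : ℕ) < k → f 0 i = 0) :
    ∀ t : ℝ, ∀ i : Fin n, (i : ℕ) < k → f t i = 0 := by
  intro t i hi
  have hsum : ∀ s : ℝ, ∑ i' : Fin n, a s i' i * f s i' = - f s i := by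
    intro s
    rw [Finset.sum_eq_single i]
    · rw [hentries s i i (Or.inr hi)]; simp
    · intro b _ hb
      rw [hentries s b i (Or.inr hi), if_neg hb, zero_mul]
    · simp
  have hode2 : ∀ s : ℝ, deriv (deriv (fun r => f r i)) s = f s i := by
    intro s
    have := hode i s
    rw [hsum s] at this
    linarith
  exact auxODE (fun s => f s i) (hdiff i) (hdiff' i) hode2 (hdecay i) (hinit i hi) t
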